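/- If C₁ ⊓ ... ⊓ Cₙ ⋢ D for an atom D, then Cᵢ ⋢ D for all i ∈ {1,...,n}. Conversely, if Cᵢ ⋢ D for all i, then C₁ ⊓ ... ⊓ Cₙ ⋢ D. -/

import Mathlib

inductive EL (N R : Type) : Type where
  | name : N → EL N R
  | top  : EL N R
  | conj : EL N R → EL N R → EL N R
  | ex   : R → EL N R → EL N R

structure Interp (N R : Type) where
  dom : Type
  nonempty : Nonempty dom
  cname : N → Set dom
  role : R → Set (dom × dom)

def Interp.sem {N R : Type} (I : Interp N R) : EL N R → Set I.dom
  | .name A => I.cname A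
  | .top => Set.univ
  | .conj C D => I.sem C ∩ I.sem D
  | .ex r C => {x | ∃ y, (x, y) ∈ I.role r ∧ y ∈ I.sem C}

/-- Semantic subsumption: `C ⊑ D` iff `C^I ⊆ D^I` for every interpretation `I`. -/
def Subsume {N R : Type} (C D : EL N R) : Prop :=
  ∀ I : Interp N R, I.sem C ⊆ I.sem D

/-- An atom is a concept name or an existential restriction. -/
def IsAtomEL {N R : Type} : EL N R → Prop
  | .name _ => True
  | .ex _ _ => True
  | _ => False

/-- Top-level atoms of a concept term. -/
def tla {N R : Type} : EL N R → List (EL N R)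
  | .conj C D => tla C ++ tla D
  | .top => []
  | .name A => [EL.name A]
  | .ex r C => [EL.ex r C]

/-- Conjunction of a nonempty list of terms `C :: Cs` (no extra ⊤ conjunct). -/
def conjs {N R : Type} : EL N R → List (EL N R) → EL N R
  | C, [] => C
  | C, D :: Ds => .conj C (conjs D Ds)

/-- Conjunction of a list of terms; the empty conjunction is ⊤. -/
def conjList {N R : Type} : List (EL N R) → EL N R
  | [] => .top
  | C :: Cs => conjs C Cs

/-- Symbol count: each concept name (and ⊤) is one symbol, each `∃r.` is one symbol. -/
def sizeEL {N R : Type} : EL N R → ℕ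
  | .name _ => 1
  | .top => 1
  | .conj C D => sizeEL C + sizeEL D + 1
  | .ex _ C => sizeEL C + 1

/-- Groundness: no occurrence of a variable (names are `V ⊕ K`, variables on the left). -/
def isGround {V K R : Type} : EL (V ⊕ K) R → Prop
  | .name (Sum.inl _) => False
  | .name (Sum.inr _) => True
  | .top => True
  | .conj C D => isGround C ∧ isGround D
  | .ex _ C => isGround C

/-- Application of a substitution `σ : V → EL (V ⊕ K) R` to a concept term. -/
def applySub {V K R : Type} (σ : V → EL (V ⊕ K) R) : EL (V ⊕ K) R → EL (V ⊕ K) R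
  | .name (Sum.inl X) => σ X
  | .name (Sum.inr A) => .name (Sum.inr A)
  | .top => .top
  | .conj C D => .conj (applySub σ C) (applySub σ D)
  | .ex r C => .ex r (applySub σ C)

/-- The variable `Y` occurs in the concept term. -/
def occursVar {V K R : Type} (Y : V) : EL (V ⊕ K) R → Prop
  | .name (Sum.inl X) => X = Y
  | .name (Sum.inr _) => False
  | .top => False
  | .conj C D => occursVar Y C ∨ occursVar Y D
  | .ex _ C => occursVar Y C

/-- conjList Cs is semantically below each member. -/
lemma sem_conjList_subset {N R : Type} (I : Interp N R) :
    ∀ (Cs : List (EL N R)) (C : EL N R), C ∈ Cs → I.sem (conjList Cs) ⊆ I.sem C := by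
  intro Cs
  match Cs with
  | [] => intro C hC; cases hC
  | C0 :: Cs' =>
    induction Cs' generalizing C0 with
    | nil => intro C hC; simp at hC; subst hC; exact fun x h => h
    | cons C1 Cs'' ih =>
      intro C hC
      have hsem : I.sem (conjList (C0 :: C1 :: Cs'')) =
          I.sem C0 ∩ I.sem (conjList (C1 :: Cs'')) := rfl
      rcases List.mem_cons.mp hC with h | h
      · subst h; exact fun x hx => (hsem ▸ hx).1
      · intro x hx
        exact ih C1 C (by simpa using h) (hsem ▸ hx).2

/-- A concept is subsumed by each of its top-level atoms. -/
lemma subsume_tla {N R : Type} : ∀ (E a : EL N R), a ∈ tla E → Subsume E a := by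
  intro E
  induction E with
  | name A => intro a ha; simp [tla] at ha; subst ha; exact fun I x h => h
  | top => intro a ha; simp [tla] at ha
  | conj C D ihC ihD =>
    intro a ha
    simp [tla] at ha
    rcases ha with h | h
    · exact fun I x hx => ihC a h I hx.1
    · exact fun I x hx => ihD a h I hx.2
  | ex r C ih => intro a ha; simp [tla] at ha; subst ha; exact fun I x h => h

lemma mem_tla_conjList {N R : Type} :
    ∀ (Cs : List (EL N R)) (a : EL N R), a ∈ tla (conjList Cs) → ∃ C ∈ Cs, a ∈ tla C := by
  intro Cs
  match Cs with
  | [] => intro a ha; simp [conjList, tla] at ha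
  | C0 :: Cs' =>
    induction Cs' generalizing C0 with
    | nil => intro a ha; exact ⟨C0, by simp, ha⟩
    | cons C1 Cs'' ih =>
      intro a ha
      have : a ∈ tla C0 ++ tla (conjList (C1 :: Cs'')) := ha
      rcases List.mem_append.mp this with h | h
      · exact ⟨C0, by simp, h⟩
      · rcases ih C1 a h with ⟨C, hC, haC⟩
        exact ⟨C, by simp at hC ⊢; tauto, haC⟩

/-- The canonical syntactic interpretation. -/
def canon (N R : Type) : Interp N R where
  dom := EL N R
  nonempty := ⟨.top⟩
  cname A := {E | EL.name A ∈ tla E}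
  role r := {p | EL.ex r p.2 ∈ tla p.1}

lemma canon_self {N R : Type} :
    ∀ (C E : EL N R), (∀ a ∈ tla C, a ∈ tla E) → E ∈ (canon N R).sem C := by
  intro C
  induction C with
  | name A => intro E h; exact h _ (by simp [tla])
  | top => intro E h; trivial
  | conj C D ihC ihD =>
    intro E h
    refine ⟨ihC E fun a ha => ?_, ihD E fun a ha => ?_⟩
    · exact h a (by simp [tla]; exact Or.inl ha)
    · exact h a (by simp [tla]; exact Or.inr ha)
  | ex r C ih =>
    intro E h
    exact ⟨C, h _ (by simp [tla]), ih C fun a ha => ha⟩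

lemma subsume_ex_mono {N R : Type} {r : R} {C D : EL N R} (h : Subsume C D) :
    Subsume (EL.ex r C) (EL.ex r D) := by
  intro I x hx
  rcases hx with ⟨y, hy, hyC⟩
  exact ⟨y, hy, h I hyC⟩

lemma canon_sound {N R : Type} :
    ∀ (C E : EL N R), E ∈ (canon N R).sem C → Subsume E C := by
  intro C
  induction C with
  | name A => intro E h; exact subsume_tla E _ h
  | top => intro E _ I x _; trivial
  | conj C D ihC ihD =>
    intro E h I x hx
    exact ⟨ihC E h.1 I hx, ihD E h.2 I hx⟩
  | ex r C ih =>
    intro E h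
    rcases h with ⟨G, hG, hGC⟩
    have h1 : Subsume E (EL.ex r G) := subsume_tla E _ hG
    have h2 : Subsume (EL.ex r G) (EL.ex r C) := subsume_ex_mono (ih G hGC)
    exact fun I x hx => h2 I (h1 I hx)

theorem stmt9 {N R : Type} (Cs : List (EL N R)) (D : EL N R)
    (hCs : ∀ C ∈ Cs, IsAtomEL C) (hD : IsAtomEL D) :
    (¬ Subsume (conjList Cs) D → ∀ C ∈ Cs, ¬ Subsume C D) ∧
    ((∀ C ∈ Cs, ¬ Subsume C D) → ¬ Subsume (conjList Cs) D) := by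
  constructor
  · intro hnot C hC hCD
    exact hnot fun I x hx => hCD I (sem_conjList_subset I Cs C hC hx)
  · intro hall hsub
    -- in the canonical model, conjList Cs satisfies itself
    have hself : (conjList Cs) ∈ (canon N R).sem (conjList Cs) :=
      canon_self _ _ (fun a ha => ha)
    have hmem : (conjList Cs) ∈ (canon N R).sem D := hsub (canon N R) hself
    -- analyze the atom D
    cases D with
    | name A =>
      have : EL.name A ∈ tla (conjList Cs) := hmem
      rcases mem_tla_conjList Cs _ this with ⟨C, hC, haC⟩
      have hatom := hCs C hC
      -- C is an atom, so tla C = [C]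
      cases C with
      | name B =>
        simp [tla] at haC
        exact hall _ hC (by rw [haC]; exact fun I x h => h)
      | top => exact hatom.elim
      | conj _ _ => exact hatom.elim
      | ex _ _ => simp [tla] at haC
    | top => exact hD.elim
    | conj _ _ => exact hD.elim
    | ex r D' =>
      rcases hmem with ⟨G, hG, hGD⟩
      have hGmem : EL.ex r G ∈ tla (conjList Cs) := hG
      rcases mem_tla_conjList Cs _ hGmem with ⟨C, hC, haC⟩
      have hatom := hCs C hC
      cases C with
      | name B => simp [tla] at haC
      | top => exact hatom.elim
      | conj _ _ => exact hatom.elim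
      | ex s G' =>
        simp [tla] at haC
        obtain ⟨hs, hG'⟩ := EL.ex.inj haC
        have hsub' : Subsume (EL.ex s G') (EL.ex r D') := by
          subst hs; subst hG'
          exact subsume_ex_mono (canon_sound D' G hGD)
        exact hall _ hC hsub'
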